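/- Let a > 0, b ≥ 0, and let c₀ be the unique positive root of x(a x² + 2b) = 4. Let u be an axisymmetric stationary rotating profile on [0, c₀), i.e. u is twice differentiable on [0, c₀) and u'(r)/√(1 + u'(r)²) = r(a r² + 2b)/4 for all r ∈ [0, c₀). Then u'(r) > 0 for all r ∈ (0, c₀) (so u is strictly increasing on [0, c₀)), and u''(r) > 0 for all r ∈ [0, c₀) with 3 a r² + 2b > 0; in particular if b > 0 then u is strictly convex on [0, c₀). -/

import Mathlib

open Set

/-- Surfaces of type I: the profile `u` is strictly increasing (`u' > 0` on `(0, c₀)`)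
and convex (`u'' > 0` wherever `3ar² + 2b > 0`); in particular strictly convex when
`b > 0`. -/
theorem stmt_10 (a b c₀ : ℝ) (ha : 0 < a) (hb : 0 ≤ b)
    (hc₀ : 0 < c₀) (hroot : c₀ * (a * c₀ ^ 2 + 2 * b) = 4)
    (u u' u'' : ℝ → ℝ)
    (hu : ∀ r ∈ Ico (0:ℝ) c₀, HasDerivAt u (u' r) r)
    (hu' : ∀ r ∈ Ico (0:ℝ) c₀, HasDerivAt u' (u'' r) r)
    (heq : ∀ r ∈ Ico (0:ℝ) c₀, u' r / Real.sqrt (1 + u' r ^ 2) = r * (a * r ^ 2 + 2 * b) / 4) :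
    (∀ r, 0 < r → r < c₀ → 0 < u' r) ∧
      StrictMonoOn u (Ico (0:ℝ) c₀) ∧
      (∀ r ∈ Ico (0:ℝ) c₀, 0 < 3 * a * r ^ 2 + 2 * b → 0 < u'' r) ∧
      (0 < b → StrictConvexOn ℝ (Ico (0:ℝ) c₀) u) := by
  have hs : ∀ r, 0 < 1 + u' r ^ 2 := fun r => by positivity
  have hsqrt : ∀ r, 0 < Real.sqrt (1 + u' r ^ 2) := fun r => Real.sqrt_pos.2 (hs r)
  -- part 1
  have h1 : ∀ r, 0 < r → r < c₀ → 0 < u' r := by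
    intro r hr hrc
    have hmem : r ∈ Ico (0:ℝ) c₀ := ⟨le_of_lt hr, hrc⟩
    have h := heq r hmem
    have hrhs : 0 < r * (a * r ^ 2 + 2 * b) / 4 := by positivity
    rw [← h] at hrhs
    have := mul_pos hrhs (hsqrt r)
    rwa [div_mul_cancel₀ _ (hsqrt r).ne'] at this
  -- part 3 : second derivative
  have h3 : ∀ r ∈ Ico (0:ℝ) c₀, 0 < 3 * a * r ^ 2 + 2 * b → 0 < u'' r := by
    intro r hr hpos
    set t := u' r with ht
    set s := 1 + t ^ 2 with hsdef
    have hs0 : 0 < s := hs r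
    have hq0 : 0 < Real.sqrt s := hsqrt r
    -- derivative of y ↦ y / √(1+y²) at t
    have hsq : HasDerivAt (fun y : ℝ => Real.sqrt (1 + y ^ 2)) (t / Real.sqrt s) t := by
      have h1' : HasDerivAt (fun y : ℝ => 1 + y ^ 2) (2 * t) t := by
        simpa using ((hasDerivAt_pow 2 t).const_add 1)
      have h2' : HasDerivAt Real.sqrt (1 / (2 * Real.sqrt s)) s :=
        Real.hasDerivAt_sqrt hs0.ne'
      have := h2'.comp t h1'
      refine this.congr_deriv ?_
      field_simp
    have hD : HasDerivAt (fun y : ℝ => y / Real.sqrt (1 + y ^ 2))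
        ((Real.sqrt s - t * (t / Real.sqrt s)) / (Real.sqrt s) ^ 2) t := by
      have := (hasDerivAt_id t).div hsq hq0.ne'
      exact this.congr_deriv (by rw [one_mul]; rfl)
    set D : ℝ := (Real.sqrt s - t * (t / Real.sqrt s)) / (Real.sqrt s) ^ 2 with hDdef
    have hDpos : 0 < D := by
      have hnum : Real.sqrt s - t * (t / Real.sqrt s) = (s - t ^ 2) / Real.sqrt s := by
        field_simp
        rw [Real.sq_sqrt hs0.le]
      have : s - t ^ 2 = 1 := by simp [hsdef]
      rw [hDdef, hnum, this]
      positivity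
    -- LHS has derivative within Ico
    have hLHS : HasDerivWithinAt (fun x => u' x / Real.sqrt (1 + u' x ^ 2))
        (D * u'' r) (Ico (0:ℝ) c₀) r := by
      exact (hD.comp r (hu' r hr)).hasDerivWithinAt
    have hRHS : HasDerivAt (fun x : ℝ => x * (a * x ^ 2 + 2 * b) / 4)
        ((3 * a * r ^ 2 + 2 * b) / 4) r := by
      have := (((hasDerivAt_id r).mul (((hasDerivAt_pow 2 r).const_mul a).add_const
          (2 * b))).div_const 4)
      refine this.congr_deriv ?_
      simp
      ring
    have hLHS' : HasDerivWithinAt (fun x => u' x / Real.sqrt (1 + u' x ^ 2))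
        ((3 * a * r ^ 2 + 2 * b) / 4) (Ico (0:ℝ) c₀) r := by
      refine HasDerivWithinAt.congr hRHS.hasDerivWithinAt ?_ (heq r hr)
      intro x hx; exact heq x hx
    have huniq : D * u'' r = (3 * a * r ^ 2 + 2 * b) / 4 := by
      have hud := (uniqueDiffOn_Ico (0:ℝ) c₀) r hr
      have e1 := hLHS.derivWithin hud
      have e2 := hLHS'.derivWithin hud
      rw [e1] at e2
      exact e2
    nlinarith [hDpos, hpos, mul_pos hDpos (div_pos hpos (by norm_num : (0:ℝ) < 4))]
  -- part 2 : strict mono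
  have h2 : StrictMonoOn u (Ico (0:ℝ) c₀) := by
    apply strictMonoOn_of_deriv_pos (convex_Ico 0 c₀)
    · intro x hx; exact (hu x hx).continuousAt.continuousWithinAt
    · intro x hx
      rw [interior_Ico] at hx
      rw [(hu x ⟨hx.1.le, hx.2⟩).deriv]
      exact h1 x hx.1 hx.2
  refine ⟨h1, h2, h3, ?_⟩
  intro hbpos
  apply strictConvexOn_of_deriv2_pos (convex_Ico 0 c₀)
  · intro x hx; exact (hu x hx).continuousAt.continuousWithinAt
  · intro x hx
    rw [interior_Ico] at hx
    have hmem : x ∈ Ico (0:ℝ) c₀ := ⟨hx.1.le, hx.2⟩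
    have hev : deriv u =ᶠ[nhds x] u' := by
      filter_upwards [isOpen_Ioo.mem_nhds hx] with y hy
      exact (hu y ⟨hy.1.le, hy.2⟩).deriv
    have : (deriv^[2] u) x = u'' x := by
      simp only [Function.iterate_succ, Function.iterate_zero, Function.comp_apply, id]
      rw [hev.deriv_eq, (hu' x hmem).deriv]
    rw [this]
    exact h3 x hmem (by positivity)
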